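/- Let (X,d) be a metric space, let p ≥ 1 be a real number, and let k ≥ 1 be an integer. For all finitely supported probability measures μ, ν, ζ on X, the latent Wasserstein discrepancy satisfies the relaxed triangle inequality W_p^L(μ,ν) ≤ 4^{1−1/p}·(W_p^L(μ,ζ) + W_p^L(ζ,ν)). -/

import Mathlib

open scoped BigOperators

/-- A finitely supported probability measure on `X`, given by its weight
function (nonnegative, finite support, total mass one). -/
structure FinProb (X : Type*) where
  w : X → ℝ
  nonneg : ∀ x, 0 ≤ w x
  finite : (Function.support w).Finite
  total : ∑ᶠ x, w x = 1

variable {X : Type*} [MetricSpace X]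

/-- `P` is a coupling of `α` and `β`: entrywise nonnegative, finitely
supported, with row marginals `α` and column marginals `β`. -/
def IsCoupling (α β : FinProb X) (P : X → X → ℝ) : Prop :=
  (∀ x y, 0 ≤ P x y) ∧ (Function.support (Function.uncurry P)).Finite ∧
  (∀ x, ∑ᶠ y, P x y = α.w x) ∧ (∀ y, ∑ᶠ x, P x y = β.w y)

/-- The transport cost `Σ_{x,y} d(x,y)^p · P x y` of a plan `P` (real exponent `p`). -/
noncomputable def transportCost (p : ℝ) (P : X → X → ℝ) : ℝ :=
  ∑ᶠ x, ∑ᶠ y, dist x y ^ p * P x y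

/-- `W_p^p(α,β)`: the optimal transport cost with ground cost `d^p` between
finitely supported probability measures. -/
noncomputable def Wpp (p : ℝ) (α β : FinProb X) : ℝ :=
  sInf {c : ℝ | ∃ P : X → X → ℝ, IsCoupling α β P ∧ c = transportCost p P}

/-- The latent optimal transport cost with (at most) `k` anchors on each side:
`OT^L(μ,ν) = inf { W_p^p(μ,μ_z) + W_p^p(μ_z,ν_z) + W_p^p(ν_z,ν) }`, the infimum
over finitely supported probability measures `μ_z, ν_z` supported on at most
`k` points. -/
noncomputable def OTL (p : ℝ) (k : ℕ) (μ ν : FinProb X) : ℝ :=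
  sInf {c : ℝ | ∃ μz νz : FinProb X,
    μz.finite.toFinset.card ≤ k ∧ νz.finite.toFinset.card ≤ k ∧
    c = Wpp p μ μz + Wpp p μz νz + Wpp p νz ν}

/-- The latent Wasserstein discrepancy `W_p^L := (OT^L)^(1/p)`. -/
noncomputable def WpL (p : ℝ) (k : ℕ) (μ ν : FinProb X) : ℝ :=
  OTL p k μ ν ^ (1 / p)

namespace LatentOTAux

open Function Finset

/-! ### Elementary rpow inequalities -/

lemma real_add_rpow_le {p a b : ℝ} (ha : 0 ≤ a) (hb : 0 ≤ b) (hp : 1 ≤ p) :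
    (a + b) ^ p ≤ (2 : ℝ) ^ (p - 1) * (a ^ p + b ^ p) := by
  lift a to NNReal using ha
  lift b to NNReal using hb
  have := NNReal.rpow_add_le_mul_rpow_add_rpow a b hp
  exact_mod_cast this

lemma real_rpow_add_le {q a b : ℝ} (ha : 0 ≤ a) (hb : 0 ≤ b) (hq0 : 0 ≤ q) (hq1 : q ≤ 1) :
    (a + b) ^ q ≤ a ^ q + b ^ q := by
  lift a to NNReal using ha
  lift b to NNReal using hb
  have := NNReal.rpow_add_le_add_rpow a b hq0 hq1
  exact_mod_cast this

lemma dist_rpow_bound {p : ℝ} (hp : 1 ≤ p) (x y z : X) :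
    dist x z ^ p ≤ (2 : ℝ) ^ (p - 1) * (dist x y ^ p + dist y z ^ p) := by
  have h1 : dist x z ^ p ≤ (dist x y + dist y z) ^ p :=
    Real.rpow_le_rpow dist_nonneg (dist_triangle x y z) (le_trans zero_le_one hp)
  exact h1.trans (real_add_rpow_le dist_nonneg dist_nonneg hp)

/-! ### Basic coupling facts -/

variable {α β γ : FinProb X} {P Q : X → X → ℝ} {p : ℝ}

lemma row_support_finite (hF : (support (uncurry P)).Finite) (x : X) :
    (support (P x)).Finite := by
  apply Set.Finite.subset (hF.image Prod.snd)
  intro y hy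
  exact ⟨(x, y), hy, rfl⟩

lemma col_support_finite (hF : (support (uncurry P)).Finite) (y : X) :
    (support fun x => P x y).Finite := by
  apply Set.Finite.subset (hF.image Prod.fst)
  intro x hx
  exact ⟨(x, y), hx, rfl⟩

lemma coupling_le_left (h : IsCoupling α β P) (x y : X) : P x y ≤ α.w x := by
  rw [← h.2.2.1 x]
  exact single_le_finsum y (row_support_finite h.2.1 x) (fun j => h.1 x j)

lemma coupling_le_right (h : IsCoupling α β P) (x y : X) : P x y ≤ β.w y := by
  rw [← h.2.2.2 y]
  exact single_le_finsum x (col_support_finite h.2.1 y) (fun j => h.1 j y)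

lemma coupling_mem_support (h : IsCoupling α β P) {x y : X} (hxy : P x y ≠ 0) :
    x ∈ α.finite.toFinset ∧ y ∈ β.finite.toFinset := by
  have h0 : 0 < P x y := lt_of_le_of_ne (h.1 x y) (Ne.symm hxy)
  constructor
  · rw [Set.Finite.mem_toFinset]
    exact ne_of_gt (lt_of_lt_of_le h0 (coupling_le_left h x y))
  · rw [Set.Finite.mem_toFinset]
    exact ne_of_gt (lt_of_lt_of_le h0 (coupling_le_right h x y))

lemma row_eq_sum (h : IsCoupling α β P) {t : Finset X} (ht : β.finite.toFinset ⊆ t) (x : X) :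
    ∑ y ∈ t, P x y = α.w x := by
  rw [← h.2.2.1 x]
  exact (finsum_eq_sum_of_support_subset _ (fun y hy => ht (coupling_mem_support h hy).2)).symm

lemma col_eq_sum (h : IsCoupling α β P) {s : Finset X} (hs : α.finite.toFinset ⊆ s) (y : X) :
    ∑ x ∈ s, P x y = β.w y := by
  rw [← h.2.2.2 y]
  exact (finsum_eq_sum_of_support_subset _ (fun x hx => hs (coupling_mem_support h hx).1)).symm

lemma transportCost_eq_sum {P : X → X → ℝ} {sX sY : Finset X}
    (h : ∀ x y, P x y ≠ 0 → x ∈ sX ∧ y ∈ sY) :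
    transportCost p P = ∑ x ∈ sX, ∑ y ∈ sY, dist x y ^ p * P x y := by
  unfold transportCost
  have h1 : ∀ x : X, ∑ᶠ y, dist x y ^ p * P x y = ∑ y ∈ sY, dist x y ^ p * P x y := by
    intro x
    apply finsum_eq_sum_of_support_subset
    intro y hy
    have hP : P x y ≠ 0 := by
      intro h0
      exact hy (by simp [h0])
    exact (h x y hP).2
  rw [finsum_congr h1]
  apply finsum_eq_sum_of_support_subset
  intro x hx
  by_contra hxs
  apply hx
  apply Finset.sum_eq_zero
  intro y _
  rcases eq_or_ne (P x y) 0 with h0 | h0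
  · rw [h0, mul_zero]
  · exact absurd ((h x y h0).1) hxs

lemma transportCost_nonneg (hP : ∀ x y, 0 ≤ P x y) : 0 ≤ transportCost p P :=
  finsum_nonneg fun x => finsum_nonneg fun y =>
    mul_nonneg (Real.rpow_nonneg dist_nonneg p) (hP x y)

lemma prod_isCoupling (α β : FinProb X) :
    IsCoupling α β (fun x y => α.w x * β.w y) := by
  refine ⟨fun x y => mul_nonneg (α.nonneg x) (β.nonneg y), ?_, ?_, ?_⟩
  · apply Set.Finite.subset (α.finite.prod β.finite)
    rintro ⟨x, y⟩ h
    simp only [uncurry, Function.mem_support, ne_eq, mul_eq_zero] at h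
    push_neg at h
    exact ⟨h.1, h.2⟩
  · intro x
    rw [← mul_finsum β.w (α.w x), β.total, mul_one]
  · intro y
    rw [← finsum_mul α.w (β.w y), α.total, one_mul]

/-! ### Wpp basic properties -/

lemma Wpp_set_nonneg (α β : FinProb X) :
    ∀ c ∈ {c : ℝ | ∃ P : X → X → ℝ, IsCoupling α β P ∧ c = transportCost p P}, 0 ≤ c := by
  intro c hc
  simp only [Set.mem_setOf_eq] at hc
  obtain ⟨P, hP, rfl⟩ := hc
  exact transportCost_nonneg hP.1

lemma Wpp_bddBelow (α β : FinProb X) :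
    BddBelow {c : ℝ | ∃ P : X → X → ℝ, IsCoupling α β P ∧ c = transportCost p P} :=
  ⟨0, fun c hc => Wpp_set_nonneg α β c hc⟩

lemma Wpp_nonneg (p : ℝ) (α β : FinProb X) : 0 ≤ Wpp p α β :=
  Real.sInf_nonneg (Wpp_set_nonneg α β)

lemma Wpp_le (h : IsCoupling α β P) : Wpp p α β ≤ transportCost p P :=
  csInf_le (Wpp_bddBelow α β) ⟨P, h, rfl⟩

lemma Wpp_exists (p : ℝ) (α β : FinProb X) {ε : ℝ} (hε : 0 < ε) :
    ∃ P : X → X → ℝ, IsCoupling α β P ∧ transportCost p P < Wpp p α β + ε := by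
  have hne : Set.Nonempty
      {c : ℝ | ∃ P : X → X → ℝ, IsCoupling α β P ∧ c = transportCost p P} :=
    ⟨_, ⟨_, prod_isCoupling α β, rfl⟩⟩
  obtain ⟨c, hc, hlt⟩ := Real.lt_sInf_add_pos hne hε
  obtain ⟨P, hP, rfl⟩ := hc
  exact ⟨P, hP, hlt⟩

/-! ### Gluing -/

/-- Glue two couplings along the common marginal `β`. -/
noncomputable def glue (β : FinProb X) (P Q : X → X → ℝ) : X → X → ℝ :=
  fun x z => ∑ y ∈ β.finite.toFinset, P x y * Q y z / β.w y

lemma glue_nonneg (hP : IsCoupling α β P) (hQ : IsCoupling β γ Q) (x z : X) :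
    0 ≤ glue β P Q x z :=
  Finset.sum_nonneg fun y _ =>
    div_nonneg (mul_nonneg (hP.1 x y) (hQ.1 y z)) (β.nonneg y)

lemma glue_ne_zero (hP : IsCoupling α β P) (hQ : IsCoupling β γ Q) {x z : X}
    (h : glue β P Q x z ≠ 0) : x ∈ α.finite.toFinset ∧ z ∈ γ.finite.toFinset := by
  obtain ⟨y, _, hy⟩ := Finset.exists_ne_zero_of_sum_ne_zero h
  have hPx : P x y ≠ 0 := by
    intro h0; apply hy; rw [h0, zero_mul, zero_div]
  have hQz : Q y z ≠ 0 := by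
    intro h0; apply hy; rw [h0, mul_zero, zero_div]
  exact ⟨(coupling_mem_support hP hPx).1, (coupling_mem_support hQ hQz).2⟩

lemma glue_isCoupling (hP : IsCoupling α β P) (hQ : IsCoupling β γ Q) :
    IsCoupling α γ (glue β P Q) := by
  have hsupp : ∀ x z, glue β P Q x z ≠ 0 →
      x ∈ α.finite.toFinset ∧ z ∈ γ.finite.toFinset := fun x z h => glue_ne_zero hP hQ h
  refine ⟨glue_nonneg hP hQ, ?_, ?_, ?_⟩
  · apply Set.Finite.subset (Set.finite_coe_iff.mp ?_ : (↑(α.finite.toFinset ×ˢ γ.finite.toFinset) : Set (X × X)).Finite)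
    · rintro ⟨x, z⟩ h
      have := hsupp x z h
      simp only [Finset.coe_product, Set.mem_prod, Finset.mem_coe]
      exact this
    · exact Set.Finite.to_subtype (Finset.finite_toSet _)
  · intro x
    have hsub : support (glue β P Q x) ⊆ ↑γ.finite.toFinset := fun z hz => (hsupp x z hz).2
    rw [finsum_eq_sum_of_support_subset _ hsub]
    unfold glue
    rw [Finset.sum_comm]
    have hterm : ∀ y ∈ β.finite.toFinset,
        ∑ z ∈ γ.finite.toFinset, P x y * Q y z / β.w y = P x y := by
      intro y hy
      have hβ : β.w y ≠ 0 := by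
        rw [Set.Finite.mem_toFinset] at hy; exact hy
      have : ∀ z, P x y * Q y z / β.w y = P x y / β.w y * Q y z := fun z => by ring
      rw [Finset.sum_congr rfl fun z _ => this z, ← Finset.mul_sum,
        row_eq_sum hQ (subset_refl _) y, div_mul_cancel₀ _ hβ]
    rw [Finset.sum_congr rfl hterm]
    exact row_eq_sum hP (subset_refl _) x
  · intro z
    have hsub : support (fun x => glue β P Q x z) ⊆ ↑α.finite.toFinset :=
      fun x hx => (hsupp x z hx).1
    rw [finsum_eq_sum_of_support_subset _ hsub]
    unfold glue
    rw [Finset.sum_comm]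
    have hterm : ∀ y ∈ β.finite.toFinset,
        ∑ x ∈ α.finite.toFinset, P x y * Q y z / β.w y = Q y z := by
      intro y hy
      have hβ : β.w y ≠ 0 := by
        rw [Set.Finite.mem_toFinset] at hy; exact hy
      have : ∀ x, P x y * Q y z / β.w y = Q y z / β.w y * P x y := fun x => by ring
      rw [Finset.sum_congr rfl fun x _ => this x, ← Finset.mul_sum,
        col_eq_sum hP (subset_refl _) y, div_mul_cancel₀ _ hβ]
    rw [Finset.sum_congr rfl hterm]
    exact col_eq_sum hQ (subset_refl _) z

lemma glue_cost (hp : 1 ≤ p) (hP : IsCoupling α β P) (hQ : IsCoupling β γ Q) :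
    transportCost p (glue β P Q) ≤
      (2 : ℝ) ^ (p - 1) * (transportCost p P + transportCost p Q) := by
  set sα := α.finite.toFinset
  set sβ := β.finite.toFinset
  set sγ := γ.finite.toFinset
  have hsupp : ∀ x z, glue β P Q x z ≠ 0 → x ∈ sα ∧ z ∈ sγ :=
    fun x z h => glue_ne_zero hP hQ h
  have hPsupp : ∀ x y, P x y ≠ 0 → x ∈ sα ∧ y ∈ sβ :=
    fun x y h => coupling_mem_support hP h
  have hQsupp : ∀ y z, Q y z ≠ 0 → y ∈ sβ ∧ z ∈ sγ :=
    fun y z h => coupling_mem_support hQ h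
  rw [transportCost_eq_sum hsupp, transportCost_eq_sum hPsupp, transportCost_eq_sum hQsupp]
  have key : ∑ x ∈ sα, ∑ z ∈ sγ, dist x z ^ p * glue β P Q x z ≤
      ∑ x ∈ sα, ∑ z ∈ sγ, ∑ y ∈ sβ,
        ((2 : ℝ) ^ (p - 1) * (dist x y ^ p * (P x y * Q y z / β.w y))
          + (2 : ℝ) ^ (p - 1) * (dist y z ^ p * (P x y * Q y z / β.w y))) := by
    apply Finset.sum_le_sum
    intro x _
    apply Finset.sum_le_sum
    intro z _
    unfold glue
    rw [Finset.mul_sum]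
    apply Finset.sum_le_sum
    intro y _
    have ht : 0 ≤ P x y * Q y z / β.w y :=
      div_nonneg (mul_nonneg (hP.1 x y) (hQ.1 y z)) (β.nonneg y)
    have hd := dist_rpow_bound hp x y z
    calc dist x z ^ p * (P x y * Q y z / β.w y)
        ≤ ((2 : ℝ) ^ (p - 1) * (dist x y ^ p + dist y z ^ p)) * (P x y * Q y z / β.w y) :=
          mul_le_mul_of_nonneg_right hd ht
      _ = (2 : ℝ) ^ (p - 1) * (dist x y ^ p * (P x y * Q y z / β.w y))
          + (2 : ℝ) ^ (p - 1) * (dist y z ^ p * (P x y * Q y z / β.w y)) := by ring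
  refine key.trans_eq ?_
  have split : ∑ x ∈ sα, ∑ z ∈ sγ, ∑ y ∈ sβ,
      ((2 : ℝ) ^ (p - 1) * (dist x y ^ p * (P x y * Q y z / β.w y))
        + (2 : ℝ) ^ (p - 1) * (dist y z ^ p * (P x y * Q y z / β.w y)))
      = (2 : ℝ) ^ (p - 1) *
          ((∑ x ∈ sα, ∑ z ∈ sγ, ∑ y ∈ sβ, dist x y ^ p * (P x y * Q y z / β.w y))
          + (∑ x ∈ sα, ∑ z ∈ sγ, ∑ y ∈ sβ, dist y z ^ p * (P x y * Q y z / β.w y))) := by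
    simp only [Finset.sum_add_distrib, ← Finset.mul_sum]
    ring
  rw [split]
  congr 1
  have T1 : (∑ x ∈ sα, ∑ z ∈ sγ, ∑ y ∈ sβ, dist x y ^ p * (P x y * Q y z / β.w y))
      = ∑ x ∈ sα, ∑ y ∈ sβ, dist x y ^ p * P x y := by
    apply Finset.sum_congr rfl
    intro x _
    rw [Finset.sum_comm]
    apply Finset.sum_congr rfl
    intro y hy
    have hβ : β.w y ≠ 0 := by
      rw [Set.Finite.mem_toFinset] at hy; exact hy
    have : ∀ z, dist x y ^ p * (P x y * Q y z / β.w y)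
        = dist x y ^ p * P x y / β.w y * Q y z := fun z => by ring
    rw [Finset.sum_congr rfl fun z _ => this z, ← Finset.mul_sum,
      row_eq_sum hQ (subset_refl _) y, div_mul_cancel₀ _ hβ]
  have T2 : (∑ x ∈ sα, ∑ z ∈ sγ, ∑ y ∈ sβ, dist y z ^ p * (P x y * Q y z / β.w y))
      = ∑ y ∈ sβ, ∑ z ∈ sγ, dist y z ^ p * Q y z := by
    calc (∑ x ∈ sα, ∑ z ∈ sγ, ∑ y ∈ sβ, dist y z ^ p * (P x y * Q y z / β.w y))
        = ∑ z ∈ sγ, ∑ x ∈ sα, ∑ y ∈ sβ, dist y z ^ p * (P x y * Q y z / β.w y) :=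
          Finset.sum_comm
      _ = ∑ z ∈ sγ, ∑ y ∈ sβ, ∑ x ∈ sα, dist y z ^ p * (P x y * Q y z / β.w y) :=
          Finset.sum_congr rfl fun z _ => Finset.sum_comm
      _ = ∑ y ∈ sβ, ∑ z ∈ sγ, ∑ x ∈ sα, dist y z ^ p * (P x y * Q y z / β.w y) :=
          Finset.sum_comm
      _ = ∑ y ∈ sβ, ∑ z ∈ sγ, dist y z ^ p * Q y z := by
          apply Finset.sum_congr rfl
          intro y hy
          have hβ : β.w y ≠ 0 := by
            rw [Set.Finite.mem_toFinset] at hy; exact hy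
          apply Finset.sum_congr rfl
          intro z _
          have : ∀ x, dist y z ^ p * (P x y * Q y z / β.w y)
              = dist y z ^ p * Q y z / β.w y * P x y := fun x => by ring
          rw [Finset.sum_congr rfl fun x _ => this x, ← Finset.mul_sum,
            col_eq_sum hP (subset_refl _) y, div_mul_cancel₀ _ hβ]
  rw [T1, T2]

/-! ### Relaxed triangle inequality for Wpp -/

lemma Wpp_triangle {p : ℝ} (hp : 1 ≤ p) (α β γ : FinProb X) :
    Wpp p α γ ≤ (2 : ℝ) ^ (p - 1) * (Wpp p α β + Wpp p β γ) := by
  set K := (2 : ℝ) ^ (p - 1) with hKdef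
  have hK : 0 < K := Real.rpow_pos_of_pos two_pos _
  refine le_of_forall_pos_le_add fun ε hε => ?_
  have hδ : 0 < ε / (2 * K) := by positivity
  obtain ⟨P, hP, hPc⟩ := Wpp_exists p α β hδ
  obtain ⟨Q, hQ, hQc⟩ := Wpp_exists p β γ hδ
  have h1 : Wpp p α γ ≤ transportCost p (glue β P Q) := Wpp_le (glue_isCoupling hP hQ)
  have h2 := glue_cost hp hP hQ
  have h3 : transportCost p P + transportCost p Q
      < Wpp p α β + Wpp p β γ + 2 * (ε / (2 * K)) := by linarith
  have h4 : K * (transportCost p P + transportCost p Q)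
      ≤ K * (Wpp p α β + Wpp p β γ + 2 * (ε / (2 * K))) :=
    mul_le_mul_of_nonneg_left h3.le hK.le
  have h5 : K * (Wpp p α β + Wpp p β γ + 2 * (ε / (2 * K)))
      = K * (Wpp p α β + Wpp p β γ) + ε := by
    field_simp
  linarith

/-! ### OTL basic properties -/

lemma OTL_set_nonneg (p : ℝ) (k : ℕ) (μ ν : FinProb X) :
    ∀ c ∈ {c : ℝ | ∃ μz νz : FinProb X,
      μz.finite.toFinset.card ≤ k ∧ νz.finite.toFinset.card ≤ k ∧
      c = Wpp p μ μz + Wpp p μz νz + Wpp p νz ν}, 0 ≤ c := by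
  intro c hc
  simp only [Set.mem_setOf_eq] at hc
  obtain ⟨μz, νz, _, _, rfl⟩ := hc
  have := Wpp_nonneg p μ μz
  have := Wpp_nonneg p μz νz
  have := Wpp_nonneg p νz ν
  linarith

lemma OTL_bddBelow (p : ℝ) (k : ℕ) (μ ν : FinProb X) :
    BddBelow {c : ℝ | ∃ μz νz : FinProb X,
      μz.finite.toFinset.card ≤ k ∧ νz.finite.toFinset.card ≤ k ∧
      c = Wpp p μ μz + Wpp p μz νz + Wpp p νz ν} :=
  ⟨0, fun c hc => OTL_set_nonneg p k μ ν c hc⟩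

lemma OTL_nonneg (p : ℝ) (k : ℕ) (μ ν : FinProb X) : 0 ≤ OTL p k μ ν :=
  Real.sInf_nonneg (OTL_set_nonneg p k μ ν)

lemma OTL_le {p : ℝ} {k : ℕ} {μ ν : FinProb X} {μz νz : FinProb X}
    (h1 : μz.finite.toFinset.card ≤ k) (h2 : νz.finite.toFinset.card ≤ k) :
    OTL p k μ ν ≤ Wpp p μ μz + Wpp p μz νz + Wpp p νz ν :=
  csInf_le (OTL_bddBelow p k μ ν) ⟨μz, νz, h1, h2, rfl⟩

open scoped Classical in
/-- The Dirac measure at a point, as a `FinProb`. -/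
noncomputable def dirac (x₀ : X) : FinProb X where
  w := fun x => if x = x₀ then 1 else 0
  nonneg := fun x => by split <;> norm_num
  finite := Set.Finite.subset (Set.finite_singleton x₀) (by
    intro x hx
    simp only [Function.mem_support, ne_eq, ite_eq_right_iff, not_forall] at hx
    simp [hx.1])
  total := by
    rw [finsum_eq_single _ x₀ (fun b hb => if_neg hb), if_pos rfl]

lemma dirac_card_le (x₀ : X) {k : ℕ} (hk : 1 ≤ k) :
    (dirac x₀ : FinProb X).finite.toFinset.card ≤ k := by
  have hsub : (dirac x₀ : FinProb X).finite.toFinset ⊆ {x₀} := by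
    intro x hx
    rw [Set.Finite.mem_toFinset] at hx
    simp only [Function.mem_support, ne_eq, dirac, ite_eq_right_iff, not_forall] at hx
    simp [hx.1]
  calc (dirac x₀ : FinProb X).finite.toFinset.card ≤ ({x₀} : Finset X).card :=
        Finset.card_le_card hsub
    _ = 1 := Finset.card_singleton x₀
    _ ≤ k := hk

lemma FinProb.exists_pos (μ : FinProb X) : ∃ x, μ.w x ≠ 0 := by
  by_contra h
  push_neg at h
  have : ∑ᶠ x, μ.w x = 0 := by
    have : μ.w = fun _ => 0 := funext h
    rw [this, finsum_zero]
  rw [μ.total] at this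
  norm_num at this

lemma OTL_exists (p : ℝ) {k : ℕ} (hk : 1 ≤ k) (μ ν : FinProb X) {ε : ℝ} (hε : 0 < ε) :
    ∃ μz νz : FinProb X, μz.finite.toFinset.card ≤ k ∧ νz.finite.toFinset.card ≤ k ∧
      Wpp p μ μz + Wpp p μz νz + Wpp p νz ν < OTL p k μ ν + ε := by
  obtain ⟨x₀, _⟩ := FinProb.exists_pos μ
  have hne : Set.Nonempty {c : ℝ | ∃ μz νz : FinProb X,
      μz.finite.toFinset.card ≤ k ∧ νz.finite.toFinset.card ≤ k ∧
      c = Wpp p μ μz + Wpp p μz νz + Wpp p νz ν} :=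
    ⟨_, ⟨dirac x₀, dirac x₀, dirac_card_le x₀ hk, dirac_card_le x₀ hk, rfl⟩⟩
  obtain ⟨c, ⟨μz, νz, h1, h2, rfl⟩, hlt⟩ := Real.lt_sInf_add_pos hne hε
  exact ⟨μz, νz, h1, h2, hlt⟩

/-! ### Relaxed triangle inequality for OTL -/

lemma OTL_relaxed {p : ℝ} (hp : 1 ≤ p) {k : ℕ} (hk : 1 ≤ k) (μ ν ζ : FinProb X) :
    OTL p k μ ν ≤ (4 : ℝ) ^ (p - 1) * (OTL p k μ ζ + OTL p k ζ ν) := by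
  set K := (2 : ℝ) ^ (p - 1) with hKdef
  set K4 := (4 : ℝ) ^ (p - 1) with hK4def
  have hK : 0 < K := Real.rpow_pos_of_pos two_pos _
  have hKK : K * K = K4 := by
    rw [hKdef, hK4def, show (4 : ℝ) = 2 * 2 by norm_num,
      Real.mul_rpow (by norm_num : (0:ℝ) ≤ 2) (by norm_num : (0:ℝ) ≤ 2)]
  have hK4 : 1 ≤ K4 := by
    have h := Real.rpow_le_rpow_of_exponent_le (by norm_num : (1 : ℝ) ≤ 4)
      (sub_nonneg.2 hp : (0 : ℝ) ≤ p - 1)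
    rwa [Real.rpow_zero] at h
  have hK4pos : 0 < K4 := lt_of_lt_of_le one_pos hK4
  refine le_of_forall_pos_le_add fun ε hε => ?_
  have hδ : 0 < ε / (2 * K4) := by positivity
  obtain ⟨μz, ζz, h1, h2, hS1⟩ := OTL_exists p hk μ ζ hδ
  obtain ⟨ζz', νz', h3, h4, hS2⟩ := OTL_exists p hk ζ ν hδ
  -- middle chain bound
  have t0 := Wpp_triangle hp μz ζ νz'
  have t1 := Wpp_triangle hp μz ζz ζ
  have t2 := Wpp_triangle hp ζ ζz' νz'
  have hmid : Wpp p μz νz' ≤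
      K4 * (Wpp p μz ζz + Wpp p ζz ζ + Wpp p ζ ζz' + Wpp p ζz' νz') := by
    calc Wpp p μz νz' ≤ K * (Wpp p μz ζ + Wpp p ζ νz') := t0
      _ ≤ K * (K * (Wpp p μz ζz + Wpp p ζz ζ) + K * (Wpp p ζ ζz' + Wpp p ζz' νz')) :=
          mul_le_mul_of_nonneg_left (add_le_add t1 t2) hK.le
      _ = K4 * (Wpp p μz ζz + Wpp p ζz ζ + Wpp p ζ ζz' + Wpp p ζz' νz') := by
          rw [← hKK]; ring
  have h5 : OTL p k μ ν ≤ Wpp p μ μz + Wpp p μz νz' + Wpp p νz' ν := OTL_le h1 h4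
  have hw1 := Wpp_nonneg p μ μz
  have hw2 := Wpp_nonneg p νz' ν
  have h7 : Wpp p μ μz + Wpp p νz' ν ≤ K4 * (Wpp p μ μz + Wpp p νz' ν) :=
    le_mul_of_one_le_left (by linarith) hK4
  have h8 : OTL p k μ ν ≤ K4 * (Wpp p μ μz + Wpp p μz ζz + Wpp p ζz ζ
      + (Wpp p ζ ζz' + Wpp p ζz' νz' + Wpp p νz' ν)) := by
    have : OTL p k μ ν ≤ K4 * (Wpp p μ μz + Wpp p νz' ν)
        + K4 * (Wpp p μz ζz + Wpp p ζz ζ + Wpp p ζ ζz' + Wpp p ζz' νz') := by linarith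
    calc OTL p k μ ν ≤ _ := this
      _ = _ := by ring
  have h9 : Wpp p μ μz + Wpp p μz ζz + Wpp p ζz ζ
      + (Wpp p ζ ζz' + Wpp p ζz' νz' + Wpp p νz' ν)
      ≤ OTL p k μ ζ + OTL p k ζ ν + 2 * (ε / (2 * K4)) := by linarith
  have h10 : K4 * (Wpp p μ μz + Wpp p μz ζz + Wpp p ζz ζ
      + (Wpp p ζ ζz' + Wpp p ζz' νz' + Wpp p νz' ν))
      ≤ K4 * (OTL p k μ ζ + OTL p k ζ ν + 2 * (ε / (2 * K4))) :=
    mul_le_mul_of_nonneg_left h9 hK4pos.le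
  have h11 : K4 * (OTL p k μ ζ + OTL p k ζ ν + 2 * (ε / (2 * K4)))
      = K4 * (OTL p k μ ζ + OTL p k ζ ν) + ε := by
    field_simp
  linarith

end LatentOTAux

/-- Relaxed triangle inequality for the latent Wasserstein discrepancy:
`W_p^L(μ,ν) ≤ 4^(1−1/p)·(W_p^L(μ,ζ) + W_p^L(ζ,ν))`. -/
theorem latent_wasserstein_relaxed_triangle (p : ℝ) (hp : 1 ≤ p) (k : ℕ) (hk : 1 ≤ k)
    (μ ν ζ : FinProb X) :
    WpL p k μ ν ≤ (4 : ℝ) ^ (1 - 1 / p) * (WpL p k μ ζ + WpL p k ζ ν) := by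
  open LatentOTAux in
  have hp0 : (0 : ℝ) < p := lt_of_lt_of_le one_pos hp
  have hq0 : (0 : ℝ) ≤ 1 / p := by positivity
  have hq1 : 1 / p ≤ 1 := by
    rw [div_le_one hp0]; exact hp
  have hA : 0 ≤ OTL p k μ ζ := LatentOTAux.OTL_nonneg p k μ ζ
  have hB : 0 ≤ OTL p k ζ ν := LatentOTAux.OTL_nonneg p k ζ ν
  have hO : 0 ≤ OTL p k μ ν := LatentOTAux.OTL_nonneg p k μ ν
  have hmain := LatentOTAux.OTL_relaxed hp hk μ ν ζ
  unfold WpL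
  calc OTL p k μ ν ^ (1 / p)
      ≤ ((4 : ℝ) ^ (p - 1) * (OTL p k μ ζ + OTL p k ζ ν)) ^ (1 / p) :=
        Real.rpow_le_rpow hO hmain hq0
    _ = ((4 : ℝ) ^ (p - 1)) ^ (1 / p) * (OTL p k μ ζ + OTL p k ζ ν) ^ (1 / p) :=
        Real.mul_rpow (by positivity) (by positivity)
    _ = (4 : ℝ) ^ (1 - 1 / p) * (OTL p k μ ζ + OTL p k ζ ν) ^ (1 / p) := by
        rw [← Real.rpow_mul (by norm_num : (0:ℝ) ≤ 4)]
        congr 1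
        rw [mul_one_div, sub_div, div_self hp0.ne']
    _ ≤ (4 : ℝ) ^ (1 - 1 / p) * (OTL p k μ ζ ^ (1 / p) + OTL p k ζ ν ^ (1 / p)) :=
        mul_le_mul_of_nonneg_left
          (LatentOTAux.real_rpow_add_le hA hB hq0 hq1)
          (Real.rpow_nonneg (by norm_num) _)
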